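/- If A is a Horn formula, A ≡≡ B, and Var(B) ⊆ Var(A), then B is equivalent to some Horn formula, i.e., there exists a Horn formula H with B ⊨ H and H ⊨ B. -/

import Mathlib

/-- A literal is a variable with a polarity (`true` = positive). A clause is a
finite set of literals. -/
abbrev Clause (V : Type) := Finset (V × Bool)

/-- A formula is a (finite) set of clauses, read as a conjunction of disjunctions. -/
abbrev Formula (V : Type) := Finset (Clause V)

variable {V : Type} [DecidableEq V]

/-- An assignment satisfies a clause if it makes some literal of it true. -/
def clauseSat (a : V → Bool) (c : Clause V) : Prop := ∃ l ∈ c, a l.1 = l.2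

/-- An assignment satisfies a formula if it satisfies all its clauses. -/
def satF (a : V → Bool) (F : Formula V) : Prop := ∀ c ∈ F, clauseSat a c

/-- Entailment: every model of `A` is a model of `B`. -/
def entails (A B : Formula V) : Prop := ∀ a : V → Bool, satF a A → satF a B

/-- Satisfiability. -/
def satisfiable (F : Formula V) : Prop := ∃ a : V → Bool, satF a F

/-- The set of variables occurring (positively or negatively) in a formula. -/
def vars (F : Formula V) : Set V := {v | ∃ c ∈ F, ∃ b : Bool, (v, b) ∈ c}

/-- Common equivalence: same consequences on the common variables. -/
def commonEquiv (A B : Formula V) : Prop :=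
  ∀ C : Formula V, vars C ⊆ vars A ∩ vars B → (entails A C ↔ entails B C)

/-- An assignment satisfies a set of literals (viewed as unit clauses). -/
def satLits (a : V → Bool) (S : Set (V × Bool)) : Prop := ∀ l ∈ S, a l.1 = l.2

/-- A clause is Horn if it has at most one positive literal. -/
def hornClause (c : Clause V) : Prop := (c.filter (fun l => l.2 = true)).card ≤ 1

/-- A formula is Horn if all its clauses are. -/
def hornFormula (F : Formula V) : Prop := ∀ c ∈ F, hornClause c

/-- A clause is definite Horn if it has exactly one positive literal. -/
def definiteClause (c : Clause V) : Prop := (c.filter (fun l => l.2 = true)).card = 1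

/-- A formula is definite Horn if all its clauses are. -/
def definiteHorn (F : Formula V) : Prop := ∀ c ∈ F, definiteClause c

/-- The size of a formula: total number of literal occurrences. -/
def fsize (F : Formula V) : ℕ := ∑ c ∈ F, c.card

/-- The set of variables `P` as a set of positive unit clauses. -/
def unitsOf (P : Finset V) : Formula V := P.image (fun p => ({(p, true)} : Clause V))

/-- The definite Horn clause `P → x`. -/
def dClause (P : Finset V) (x : V) : Clause V :=
  P.image (fun p => ((p, false) : V × Bool)) ∪ {(x, true)}

/-- `F ⊨ P`: the formula entails every variable of `P`. -/
def entailsV (F : Formula V) (P : Finset V) : Prop := entails F (unitsOf P)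

/-- A definite Horn formula is single-head if no two distinct clauses share a head. -/
def singleHead (F : Formula V) : Prop :=
  ∀ (P P' : Finset V) (x : V), x ∉ P → x ∉ P' →
    dClause P x ∈ F → dClause P' x ∈ F → P = P'

/-- The body of a clause: its negated variables. -/
def body (c : Clause V) : Finset V := (c.filter (fun l => l.2 = false)).image Prod.fst

/-- `F^x`: the clauses of `F` containing neither `x` nor `¬x`. -/
def restr (F : Formula V) (x : V) : Formula V :=
  F.filter (fun c => ((x, true) : V × Bool) ∉ c ∧ ((x, false) : V × Bool) ∉ c)

/-- `F[⊥/x]`: delete the clauses containing `¬x`, remove the literal `x` elsewhere. -/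
def substFalse (F : Formula V) (x : V) : Formula V :=
  (F.filter (fun c => ((x, false) : V × Bool) ∉ c)).image (fun c => c.erase (x, true))

/-- `newvar P x F`: summarize the body part `P` by the new variable `x`. -/
def newvar (P : Finset V) (x : V) (F : Formula V) : Formula V :=
  ((F.filter (fun c => ∀ p ∈ P, ((p, false) : V × Bool) ∈ c)).image
      (fun c => (c \ P.image (fun p => ((p, false) : V × Bool))) ∪ {((x, false) : V × Bool)}))
    ∪ (F.filter (fun c => ¬ ∀ p ∈ P, ((p, false) : V × Bool) ∈ c))
    ∪ {dClause P x}


/-- Auxiliary: the variables of a formula as a `Finset`. -/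
def varsFin (F : Formula V) : Finset V := F.biUnion (fun c => c.image Prod.fst)

lemma mem_varsFin {F : Formula V} {v : V} : v ∈ varsFin F ↔ v ∈ vars F := by
  simp only [varsFin, Finset.mem_biUnion, Finset.mem_image, vars, Set.mem_setOf_eq]
  constructor
  · rintro ⟨c, hc, ⟨x, b⟩, hl, rfl⟩; exact ⟨c, hc, b, hl⟩
  · rintro ⟨c, hc, b, hl⟩; exact ⟨c, hc, (v, b), hl, rfl⟩

lemma satF_congr {F : Formula V} {a a' : V → Bool}
    (hag : ∀ v ∈ varsFin F, a v = a' v) (hs : satF a F) : satF a' F := by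
  intro c hc
  obtain ⟨l, hl, hal⟩ := hs c hc
  refine ⟨l, hl, ?_⟩
  rw [← hag l.1 (Finset.mem_biUnion.mpr ⟨c, hc, Finset.mem_image.mpr ⟨l, hl, rfl⟩⟩)]
  exact hal

lemma horn_and {F : Formula V} (hF : hornFormula F) {a b : V → Bool}
    (ha : satF a F) (hb : satF b F) : satF (fun v => a v && b v) F := by
  intro c hc
  obtain ⟨l1, hl1, h1⟩ := ha c hc
  obtain ⟨l2, hl2, h2⟩ := hb c hc
  by_cases e1 : l1.2 = true
  · by_cases e2 : l2.2 = true
    · have heq : l1 = l2 := Finset.card_le_one.mp (hF c hc) l1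
        (Finset.mem_filter.mpr ⟨hl1, by simp [e1]⟩) l2
        (Finset.mem_filter.mpr ⟨hl2, by simp [e2]⟩)
      subst heq
      exact ⟨l1, hl1, by simp only; rw [h1, h2, e1]; simp⟩
    · have e2' : l2.2 = false := by simpa using e2
      refine ⟨l2, hl2, ?_⟩
      simp only
      rw [e2'] at h2 ⊢
      simp [h2]
  · have e1' : l1.2 = false := by simpa using e1
    refine ⟨l1, hl1, ?_⟩
    simp only
    rw [e1'] at h1 ⊢
    simp [h1]

lemma exists_agree {A B : Formula V} {W : Finset V}
    (hAB : ∀ c : Clause V, (∀ l ∈ c, l.1 ∈ W) → entails A {c} → entails B {c})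
    {b : V → Bool} (hb : satF b B) : ∃ a, satF a A ∧ ∀ v ∈ W, a v = b v := by
  by_contra hcon
  push_neg at hcon
  have hent : entails A {W.image (fun v => (v, !(b v)))} := by
    intro a ha c' hc'
    rw [Finset.mem_singleton] at hc'
    subst hc'
    obtain ⟨v, hvW, hne⟩ := hcon a ha
    refine ⟨(v, !(b v)), Finset.mem_image.mpr ⟨v, hvW, rfl⟩, ?_⟩
    simp only
    cases hbv : b v <;> cases hav : a v <;> simp_all
  have htr := hAB _ (by
    rintro l hl
    obtain ⟨v, hv, rfl⟩ := Finset.mem_image.mp hl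
    exact hv) hent
  obtain ⟨l, hl, hbl⟩ := htr b hb _ (Finset.mem_singleton_self _)
  obtain ⟨v, hv, rfl⟩ := Finset.mem_image.mp hl
  simp at hbl
/-- if `A` is Horn, `A ≡≡ B` and `Var(B) ⊆ Var(A)`, then `B` is
equivalent to a Horn formula. -/
theorem commonEquiv_horn (A B : Formula V)
    (hA : hornFormula A) (h : commonEquiv A B) (hv : vars B ⊆ vars A) :
    ∃ H : Formula V, hornFormula H ∧ entails B H ∧ entails H B := by

  classical
  set W : Finset V := varsFin B with hW
  have hvW : ∀ {c : Clause V}, (∀ l ∈ c, l.1 ∈ W) →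
      vars ({c} : Formula V) ⊆ vars A ∩ vars B := by
    intro c hc v hvv
    obtain ⟨c', hc', b, hb⟩ := hvv
    rw [Finset.mem_singleton] at hc'
    subst hc'
    have hvB : v ∈ vars B := mem_varsFin.mp (hc (v, b) hb)
    exact ⟨hv hvB, hvB⟩
  have tAB : ∀ c : Clause V, (∀ l ∈ c, l.1 ∈ W) → entails A {c} → entails B {c} :=
    fun c hc => (h {c} (hvW hc)).mp
  have tBA : ∀ c : Clause V, (∀ l ∈ c, l.1 ∈ W) → entails B {c} → entails A {c} :=
    fun c hc => (h {c} (hvW hc)).mpr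
  have extB : ∀ {b : V → Bool}, satF b B → ∃ a, satF a A ∧ ∀ v ∈ W, a v = b v :=
    fun hb => exists_agree tAB hb
  have extA : ∀ {a : V → Bool}, satF a A → ∃ b, satF b B ∧ ∀ v ∈ W, b v = a v :=
    fun ha => exists_agree tBA ha
  have Band : ∀ {x y : V → Bool}, satF x B → satF y B → satF (fun v => x v && y v) B := by
    intro x y hx hy
    obtain ⟨x', hx', hxa⟩ := extB hx
    obtain ⟨y', hy', hya⟩ := extB hy
    obtain ⟨w, hw, hwa⟩ := extA (horn_and hA hx' hy')
    refine satF_congr (F := B) ?_ hw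
    intro v hvB
    have h1 := hwa v hvB
    have h2 := hxa v hvB
    have h3 := hya v hvB
    show w v = (x v && y v)
    rw [h1, h2, h3]
  set H : Formula V :=
    (W ×ˢ (Finset.univ : Finset Bool)).powerset.filter
      (fun c => hornClause c ∧ entails B {c}) with hH
  refine ⟨H, ?_, ?_, ?_⟩
  · intro c hc
    exact ((Finset.mem_filter.mp hc).2).1
  · intro a ha c hc
    exact ((Finset.mem_filter.mp hc).2).2 a ha c (Finset.mem_singleton_self c)
  · intro m hm
    set T : Finset V := W.filter (fun v => m v = true) with hT
    set S : Finset V := W.filter (fun v => m v = false) with hS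
    set cneg : Clause V := T.image (fun p => ((p, false) : V × Bool)) with hcneg
    have hcnegmem : cneg ⊆ W ×ˢ Finset.univ := by
      intro l hl
      obtain ⟨p, hp, rfl⟩ := Finset.mem_image.mp hl
      exact Finset.mem_product.mpr ⟨(Finset.mem_filter.mp hp).1, Finset.mem_univ _⟩
    have hcnegfilter : cneg.filter (fun l => l.2 = true) = ∅ := by
      apply Finset.filter_eq_empty_iff.mpr
      intro l hl
      obtain ⟨p, hp, rfl⟩ := Finset.mem_image.mp hl
      simp
    have hcneghorn : hornClause cneg := by
      simp [hornClause, hcnegfilter]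
    have base : ∃ a, satF a B ∧ ∀ p ∈ T, a p = true := by
      by_contra hcon
      push_neg at hcon
      have hent : entails B {cneg} := by
        intro a ha c' hc'
        rw [Finset.mem_singleton] at hc'
        subst hc'
        obtain ⟨p, hp, hne⟩ := hcon a ha
        exact ⟨(p, false), Finset.mem_image.mpr ⟨p, hp, rfl⟩, by simpa using hne⟩
      have hmem : cneg ∈ H := Finset.mem_filter.mpr
        ⟨Finset.mem_powerset.mpr hcnegmem, hcneghorn, hent⟩
      obtain ⟨l, hl, hml⟩ := hm cneg hmem
      obtain ⟨p, hp, rfl⟩ := Finset.mem_image.mp hl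
      have : m p = true := (Finset.mem_filter.mp hp).2
      simp [this] at hml
    have step : ∀ v ∈ S, ∃ a, satF a B ∧ (∀ p ∈ T, a p = true) ∧ a v = false := by
      intro v hvS
      by_contra hcon
      push_neg at hcon
      set cv : Clause V := insert ((v, true) : V × Bool) cneg with hcv
      have hent : entails B {cv} := by
        intro a ha c' hc'
        rw [Finset.mem_singleton] at hc'
        subst hc'
        by_cases hall : ∀ p ∈ T, a p = true
        · have hne := hcon a ha hall
          have hav : a v = true := by
            cases h' : a v
            · exact absurd h' hne
            · rfl
          exact ⟨(v, true), Finset.mem_insert_self _ _, hav⟩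
        · push_neg at hall
          obtain ⟨p, hp, hne⟩ := hall
          exact ⟨(p, false), Finset.mem_insert_of_mem (Finset.mem_image.mpr ⟨p, hp, rfl⟩),
            by simpa using hne⟩
      have hcvmem : cv ⊆ W ×ˢ Finset.univ := by
        intro l hl
        rcases Finset.mem_insert.mp hl with rfl | hl
        · exact Finset.mem_product.mpr ⟨(Finset.mem_filter.mp hvS).1, Finset.mem_univ _⟩
        · exact hcnegmem hl
      have hcvhorn : hornClause cv := by
        unfold hornClause
        rw [hcv, Finset.filter_insert]
        simp [hcnegfilter]
      have hmem : cv ∈ H := Finset.mem_filter.mpr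
        ⟨Finset.mem_powerset.mpr hcvmem, hcvhorn, hent⟩
      obtain ⟨l, hl, hml⟩ := hm cv hmem
      rcases Finset.mem_insert.mp hl with rfl | hl
      · have : m v = false := (Finset.mem_filter.mp hvS).2
        simp [this] at hml
      · obtain ⟨p, hp, rfl⟩ := Finset.mem_image.mp hl
        have : m p = true := (Finset.mem_filter.mp hp).2
        simp [this] at hml
    have key : ∀ S' : Finset V, S' ⊆ S →
        ∃ a, satF a B ∧ (∀ p ∈ T, a p = true) ∧ ∀ v ∈ S', a v = false := by
      intro S'
      induction S' using Finset.induction_on with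
      | empty =>
        intro _
        obtain ⟨a, ha, haT⟩ := base
        exact ⟨a, ha, haT, by simp⟩
      | insert _ _ hx ih =>
        intro hsub
        obtain ⟨a, ha, haT, haS⟩ := ih (fun y hy => hsub (Finset.mem_insert_of_mem hy))
        obtain ⟨a', ha', ha'T, ha'v⟩ := step _ (hsub (Finset.mem_insert_self _ _))
        refine ⟨fun v => a v && a' v, Band ha ha', ?_, ?_⟩
        · intro p hp
          simp [haT p hp, ha'T p hp]
        · intro u hu
          rcases Finset.mem_insert.mp hu with rfl | hu
          · simp [ha'v]
          · simp [haS u hu]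
    obtain ⟨a, ha, haT, haS⟩ := key S Finset.Subset.rfl
    refine satF_congr (F := B) ?_ ha
    intro v hvB
    cases hmv : m v
    · rw [haS v (Finset.mem_filter.mpr ⟨hvB, hmv⟩)]
    · rw [haT v (Finset.mem_filter.mpr ⟨hvB, hmv⟩)]
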